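/- Let q ∈ (0,1) ∪ (1,2], let ρ = ∑_k λ_k |ψ_k⟩⟨ψ_k| with λ_k ≥ 0, ∑λ_k = 1, and let each |ψ_k⟩ have Schmidt coefficients α_{kn}. Then the Tsallis correlation measure satisfies Q_q(ρ) ≥ (1/(1-q))·(1 − (∑_{k,n} λ_k α_{kn}^{2/q})^q), with equality when ρ is pure. -/

import Mathlib

open Finset

lemma norm_sq_eq_conj_mul_re (z : ℂ) : ‖z‖ ^ 2 = ((starRingEnd ℂ) z * z).re := by
  rw [mul_comm, Complex.mul_conj]
  simp [Complex.normSq_eq_norm_sq, ← Complex.ofReal_pow]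

lemma unitary_cols {d : ℕ} (M : Fin d → Fin d → ℂ)
    (h : ∀ i j, (∑ a, (starRingEnd ℂ) (M i a) * M j a) = if i = j then 1 else 0) :
    ∀ a b, (∑ i, (starRingEnd ℂ) (M i a) * M i b) = if a = b then 1 else 0 := by
  set A : Matrix (Fin d) (Fin d) ℂ := Matrix.of M with hA
  have h1 : A * A.conjTranspose = 1 := by
    ext i j
    have := congrArg (starRingEnd ℂ) (h i j)
    simp only [map_sum, map_mul, starRingEnd_self_apply] at this
    simp only [Matrix.mul_apply, Matrix.conjTranspose_apply, Matrix.one_apply, hA,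
      Matrix.of_apply, RCLike.star_def]
    rw [this]
    split <;> simp
  have h2 : A.conjTranspose * A = 1 := mul_eq_one_comm.mp h1
  intro a b
  have := congrFun (congrFun h2 a) b
  simpa [Matrix.mul_apply, Matrix.conjTranspose_apply, Matrix.one_apply, hA] using this

lemma sum_inner_one {d : ℕ} (e ξ : Fin d → Fin d → ℂ)
    (he : ∀ i j, (∑ a, (starRingEnd ℂ) (e i a) * e j a) = if i = j then 1 else 0)
    (hξ : ∀ i j, (∑ a, (starRingEnd ℂ) (ξ i a) * ξ j a) = if i = j then 1 else 0)
    (i : Fin d) :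
    ∑ n, ‖∑ a, (starRingEnd ℂ) (e i a) * ξ n a‖ ^ 2 = 1 := by
  have key : (∑ n, (starRingEnd ℂ) (∑ a, (starRingEnd ℂ) (e i a) * ξ n a) *
      (∑ b, (starRingEnd ℂ) (e i b) * ξ n b)) = 1 := by
    have hcols := unitary_cols ξ hξ
    calc (∑ n, (starRingEnd ℂ) (∑ a, (starRingEnd ℂ) (e i a) * ξ n a) *
          (∑ b, (starRingEnd ℂ) (e i b) * ξ n b))
        = ∑ a, ∑ b, (e i b * (starRingEnd ℂ) (e i a)) *
            ∑ n, (starRingEnd ℂ) (ξ n b) * ξ n a := by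
          simp only [map_sum, map_mul, starRingEnd_self_apply, Finset.sum_mul,
            Finset.mul_sum]
          rw [Finset.sum_comm]
          congr 1; ext a
          rw [Finset.sum_comm]
          congr 1; ext b
          congr 1; ext n; ring
      _ = ∑ a, e i a * (starRingEnd ℂ) (e i a) := by
          congr 1; ext a
          rw [Finset.sum_eq_single a]
          · rw [hcols a a]; simp
          · intro b _ hb
            rw [hcols b a, if_neg hb, mul_zero]
          · simp
      _ = 1 := by
          have h1 := he i i
          rw [if_pos rfl] at h1
          have h2 := congrArg (starRingEnd ℂ) h1
          simp only [map_sum, map_mul, starRingEnd_self_apply, map_one] at h2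
          exact h2
  have hre : ((∑ n, (starRingEnd ℂ) (∑ a, (starRingEnd ℂ) (e i a) * ξ n a) *
      (∑ b, (starRingEnd ℂ) (e i b) * ξ n b)).re) = 1 := by rw [key]; simp
  rw [← hre, Complex.re_sum]
  congr 1; ext n
  exact norm_sq_eq_conj_mul_re _

lemma sq_rpow_div {x q : ℝ} (hx : 0 ≤ x) : ((x ^ 2) : ℝ) ^ (1/q) = x ^ (2/q) := by
  rw [← Real.rpow_natCast x 2, ← Real.rpow_mul hx]
  norm_num [div_eq_mul_inv]

lemma rpow_div_rpow {y q : ℝ} (hy : 0 ≤ y) (hq : q ≠ 0) : (y ^ (1/q)) ^ q = y := by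
  rw [← Real.rpow_mul hy, one_div_mul_cancel hq, Real.rpow_one]

theorem tsallis_correlation_lower_bound (d m : ℕ) (q : ℝ)
    (hq : (0 < q ∧ q < 1) ∨ (1 < q ∧ q ≤ 2))
    (lam : Fin m → ℝ) (hl : ∀ k, 0 ≤ lam k) (hls : ∑ k, lam k = 1)
    (α : Fin m → Fin d → ℝ) (hα : ∀ k n, 0 ≤ α k n) (hαs : ∀ k, ∑ n, (α k n) ^ 2 = 1)
    (ξ : Fin m → Fin d → Fin d → ℂ)
    (hξ : ∀ k i j, (∑ a, (starRingEnd ℂ) (ξ k i a) * ξ k j a) = if i = j then 1 else 0) :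
    (∀ eA : Fin d → Fin d → ℂ,
      (∀ i j, (∑ a, (starRingEnd ℂ) (eA i a) * eA j a) = if i = j then 1 else 0) →
      (1 / (1 - q)) * (1 - (∑ k, ∑ n, lam k * (α k n) ^ (2 / q)) ^ q) ≤
        (1 / (1 - q)) * (1 - (∑ i, ∑ k, lam k *
          (∑ n, (α k n) ^ 2 * ‖∑ a, (starRingEnd ℂ) (eA i a) * ξ k n a‖ ^ 2) ^ (1 / q)) ^ q)) ∧
    (∀ k₀ : Fin m, (∀ k, lam k = if k = k₀ then 1 else 0) →
      ∃ eA : Fin d → Fin d → ℂ,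
        (∀ i j, (∑ a, (starRingEnd ℂ) (eA i a) * eA j a) = if i = j then 1 else 0) ∧
        (1 / (1 - q)) * (1 - (∑ i, ∑ k, lam k *
          (∑ n, (α k n) ^ 2 * ‖∑ a, (starRingEnd ℂ) (eA i a) * ξ k n a‖ ^ 2) ^ (1 / q)) ^ q)
          = (1 / (1 - q)) * (1 - (∑ k, ∑ n, lam k * (α k n) ^ (2 / q)) ^ q)) := by
  have hq0 : 0 < q := by
    rcases hq with ⟨h, _⟩ | ⟨h, _⟩
    · exact h
    · linarith
  have hqne : q ≠ 0 := ne_of_gt hq0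
  constructor
  · intro eA he
    set p : Fin m → Fin d → Fin d → ℝ :=
      fun k i n => ‖∑ a, (starRingEnd ℂ) (eA i a) * ξ k n a‖ ^ 2 with hpdef
    have hp0 : ∀ k i n, 0 ≤ p k i n := fun k i n => sq_nonneg _
    have hrow : ∀ k i, ∑ n, p k i n = 1 := fun k i => sum_inner_one eA (ξ k) he (hξ k) i
    have hcol : ∀ k n, ∑ i, p k i n = 1 := by
      intro k n
      have h := sum_inner_one (ξ k) eA (hξ k) he n
      rw [← h]
      refine Finset.sum_congr rfl fun i _ => ?_
      have hc : (∑ a, (starRingEnd ℂ) (ξ k n a) * eA i a) =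
          (starRingEnd ℂ) (∑ a, (starRingEnd ℂ) (eA i a) * ξ k n a) := by
        rw [map_sum]
        refine Finset.sum_congr rfl fun a _ => ?_
        rw [map_mul, starRingEnd_self_apply]
        ring
      simp only [hpdef]
      rw [hc, RCLike.norm_conj]
    -- rewrite the goal's double sum in terms of p
    have hgoal_eq : (∑ i, ∑ k, lam k *
        (∑ n, (α k n) ^ 2 * ‖∑ a, (starRingEnd ℂ) (eA i a) * ξ k n a‖ ^ 2) ^ (1 / q))
        = ∑ k, lam k * ∑ i, (∑ n, (α k n) ^ 2 * p k i n) ^ (1 / q) := by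
      rw [Finset.sum_comm]
      exact Finset.sum_congr rfl fun k _ => (Finset.mul_sum _ _ _).symm
    rw [hgoal_eq]
    have hbase0 : ∀ k i, 0 ≤ ∑ n, (α k n) ^ 2 * p k i n :=
      fun k i => Finset.sum_nonneg fun n _ => mul_nonneg (sq_nonneg _) (hp0 k i n)
    have hswap : ∀ k, (∑ i, ∑ n, p k i n * ((α k n) ^ 2) ^ (1/q)) = ∑ n, (α k n) ^ (2/q) := by
      intro k
      rw [Finset.sum_comm]
      refine Finset.sum_congr rfl fun n _ => ?_
      rw [← Finset.sum_mul, hcol k n, one_mul, sq_rpow_div (hα k n)]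
    rcases hq with ⟨hq0', hq1⟩ | ⟨hq1, hq2⟩
    · -- q < 1 : N ≤ S
      have h1q : (1:ℝ) ≤ 1/q := by rw [le_div_iff₀ hq0]; linarith
      have hsum1 : ∀ k, ∑ i, (∑ n, (α k n) ^ 2 * p k i n) ^ (1/q) ≤ ∑ n, (α k n) ^ (2/q) := by
        intro k
        rw [← hswap k]
        refine Finset.sum_le_sum fun i _ => ?_
        have hmc : (∑ n, (α k n) ^ 2 * p k i n) = ∑ n, p k i n * (α k n) ^ 2 :=
          Finset.sum_congr rfl fun n _ => mul_comm _ _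
        rw [hmc]
        exact Real.rpow_arith_mean_le_arith_mean_rpow Finset.univ (p k i)
          (fun n => (α k n) ^ 2) (fun n _ => hp0 k i n) (hrow k i)
          (fun n _ => sq_nonneg _) h1q
      have hNS : (∑ k, lam k * ∑ i, (∑ n, (α k n) ^ 2 * p k i n) ^ (1/q)) ≤
          ∑ k, ∑ n, lam k * (α k n) ^ (2/q) := by
        refine Finset.sum_le_sum fun k _ => ?_
        rw [← Finset.mul_sum]
        exact mul_le_mul_of_nonneg_left (hsum1 k) (hl k)
      have hN0 : 0 ≤ ∑ k, lam k * ∑ i, (∑ n, (α k n) ^ 2 * p k i n) ^ (1/q) :=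
        Finset.sum_nonneg fun k _ => mul_nonneg (hl k)
          (Finset.sum_nonneg fun i _ => Real.rpow_nonneg (hbase0 k i) _)
      have hpow := Real.rpow_le_rpow hN0 hNS hq0.le
      have hc : (0:ℝ) ≤ 1 / (1 - q) := div_nonneg zero_le_one (by linarith)
      exact mul_le_mul_of_nonneg_left (by linarith) hc
    · -- q > 1 : S ≤ N
      have hsum2 : ∀ k, (∑ n, (α k n) ^ (2/q)) ≤ ∑ i, (∑ n, (α k n) ^ 2 * p k i n) ^ (1/q) := by
        intro k
        rw [← hswap k]
        refine Finset.sum_le_sum fun i _ => ?_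
        have hmean := Real.arith_mean_le_rpow_mean Finset.univ (p k i)
          (fun n => ((α k n) ^ 2) ^ (1/q)) (fun n _ => hp0 k i n) (hrow k i)
          (fun n _ => Real.rpow_nonneg (sq_nonneg _) _) hq1.le
        have hz : ∀ n : Fin d, (((α k n) ^ 2) ^ (1/q)) ^ q = (α k n) ^ 2 :=
          fun n => rpow_div_rpow (sq_nonneg _) hqne
        simp only [hz] at hmean
        have hmc : (∑ n, (α k n) ^ 2 * p k i n) = ∑ n, p k i n * (α k n) ^ 2 :=
          Finset.sum_congr rfl fun n _ => mul_comm _ _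
        rw [hmc]
        exact hmean
      have hSN : (∑ k, ∑ n, lam k * (α k n) ^ (2/q)) ≤
          ∑ k, lam k * ∑ i, (∑ n, (α k n) ^ 2 * p k i n) ^ (1/q) := by
        refine Finset.sum_le_sum fun k _ => ?_
        rw [← Finset.mul_sum]
        exact mul_le_mul_of_nonneg_left (hsum2 k) (hl k)
      have hS0 : 0 ≤ ∑ k, ∑ n, lam k * (α k n) ^ (2/q) :=
        Finset.sum_nonneg fun k _ => Finset.sum_nonneg fun n _ =>
          mul_nonneg (hl k) (Real.rpow_nonneg (hα k n) _)
      have hpow := Real.rpow_le_rpow hS0 hSN hq0.le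
      have hc : 1 / (1 - q) ≤ (0:ℝ) :=
        div_nonpos_of_nonneg_of_nonpos zero_le_one (by linarith)
      exact mul_le_mul_of_nonpos_left (by linarith) hc
  · intro k₀ hk
    refine ⟨ξ k₀, hξ k₀, ?_⟩
    have hL : (∑ i, ∑ k, lam k *
        (∑ n, (α k n) ^ 2 * ‖∑ a, (starRingEnd ℂ) (ξ k₀ i a) * ξ k n a‖ ^ 2) ^ (1 / q))
        = ∑ i, (∑ n, (α k₀ n) ^ 2 *
          ‖∑ a, (starRingEnd ℂ) (ξ k₀ i a) * ξ k₀ n a‖ ^ 2) ^ (1 / q) := by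
      refine Finset.sum_congr rfl fun i _ => ?_
      simp only [hk, ite_mul, one_mul, zero_mul]
      rw [Finset.sum_ite_eq' Finset.univ k₀]
      simp
    have hR : (∑ k, ∑ n, lam k * (α k n) ^ (2 / q)) = ∑ n, (α k₀ n) ^ (2/q) := by
      rw [Finset.sum_comm]
      refine Finset.sum_congr rfl fun n _ => ?_
      simp only [hk, ite_mul, one_mul, zero_mul]
      rw [Finset.sum_ite_eq' Finset.univ k₀]
      simp
    have hmain : (∑ i, ∑ k, lam k *
        (∑ n, (α k n) ^ 2 * ‖∑ a, (starRingEnd ℂ) (ξ k₀ i a) * ξ k n a‖ ^ 2) ^ (1 / q))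
        = ∑ k, ∑ n, lam k * (α k n) ^ (2 / q) := by
      rw [hL, hR]
      refine Finset.sum_congr rfl fun i _ => ?_
      have hinner : (∑ n, (α k₀ n) ^ 2 *
          ‖∑ a, (starRingEnd ℂ) (ξ k₀ i a) * ξ k₀ n a‖ ^ 2) = (α k₀ i) ^ 2 := by
        have hterm : ∀ n : Fin d, ‖∑ a, (starRingEnd ℂ) (ξ k₀ i a) * ξ k₀ n a‖ ^ 2
            = if i = n then 1 else 0 := by
          intro n
          rw [hξ k₀ i n]
          split <;> simp
        simp only [hterm, mul_ite, mul_one, mul_zero]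
        rw [Finset.sum_ite_eq Finset.univ i]
        simp
      rw [hinner, sq_rpow_div (hα k₀ i)]
    rw [hmain]
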